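/- Let 𝐁 ∈ 𝕀ℝ^{n×k} and 𝐂 ∈ 𝕀ℝ^{n×(n−k)} with the radius of every entry of 𝐂 strictly positive. Then the square interval matrix (𝐁^∀ 𝐂^∃) (columns of 𝐁 universally quantified, columns of 𝐂 existentially quantified) is AE regular if and only if 𝐁 has strongly full column rank, i.e., every B ∈ 𝐁 has rank k. -/

import Mathlib

open Matrix Polynomial Module

/-- If some completion gives nonzero determinant, B has full column rank. -/
lemma aux_rank_of_det {k m : ℕ} (B : Matrix (Fin k ⊕ Fin m) (Fin k) ℝ)
    (C : Matrix (Fin k ⊕ Fin m) (Fin m) ℝ)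
    (h : (Matrix.fromCols B C).det ≠ 0) : B.rank = k := by
  have hu : IsUnit (Matrix.fromCols B C) :=
    (Matrix.isUnit_iff_isUnit_det _).mpr (isUnit_iff_ne_zero.mpr h)
  have hinj : Function.Injective (Matrix.fromCols B C).mulVec :=
    Matrix.mulVec_injective_iff_isUnit.mpr hu
  have hBinj : Function.Injective B.mulVecLin := by
    intro x y hxy
    have h2 : (Matrix.fromCols B C).mulVec (Sum.elim x 0) =
        (Matrix.fromCols B C).mulVec (Sum.elim y 0) := by
      simp only [Matrix.fromCols_mulVec_sumElim, Matrix.mulVec_zero]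
      simpa [Matrix.mulVecLin_apply] using hxy
    have h3 := hinj h2
    funext i
    exact congrFun h3 (Sum.inl i)
  rw [Matrix.rank, LinearMap.finrank_range_of_inj hBinj]
  simp

/-- A full column rank matrix can be completed to an invertible square matrix. -/
lemma aux_exists_completion {k m : ℕ} (B : Matrix (Fin k ⊕ Fin m) (Fin k) ℝ)
    (hr : B.rank = k) :
    ∃ C₁ : Matrix (Fin k ⊕ Fin m) (Fin m) ℝ, (Matrix.fromCols B C₁).det ≠ 0 := by
  set W := LinearMap.range B.mulVecLin with hW
  obtain ⟨q, hq⟩ := Submodule.exists_isCompl W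
  have htot : finrank ℝ (Fin k ⊕ Fin m → ℝ) = k + m := by simp
  have hsum := Submodule.finrank_add_eq_of_isCompl hq
  have hqm : finrank ℝ q = m := by
    have hWk : finrank ℝ W = k := hr
    omega
  let b : Basis (Fin m) ℝ q := finBasisOfFinrankEq ℝ q hqm
  set C₁ : Matrix (Fin k ⊕ Fin m) (Fin m) ℝ := Matrix.of fun i j => (b j : Fin k ⊕ Fin m → ℝ) i with hC₁
  have hsurj : Function.Surjective (Matrix.fromCols B C₁).mulVec := by
    intro v
    have hv : v ∈ W ⊔ q := by rw [hq.sup_eq_top]; trivial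
    obtain ⟨w, hw, u, hu, rfl⟩ := Submodule.mem_sup.mp hv
    obtain ⟨x, hx⟩ := hw
    refine ⟨Sum.elim x (fun j => b.repr ⟨u, hu⟩ j), ?_⟩
    rw [Matrix.fromCols_mulVec_sumElim]
    have hcu : C₁.mulVec (fun j => b.repr ⟨u, hu⟩ j) = u := by
      have hrepr := b.sum_repr ⟨u, hu⟩
      have key : C₁.mulVec (fun j => b.repr ⟨u, hu⟩ j) =
          ((∑ j, b.repr ⟨u, hu⟩ j • b j : q) : Fin k ⊕ Fin m → ℝ) := by
        funext i
        simp [Matrix.mulVec, dotProduct, hC₁, AddSubmonoidClass.coe_finset_sum,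
          Finset.sum_apply, mul_comm, -Module.Basis.sum_repr]
      rw [key, hrepr]
    rw [hcu]
    rw [← hx]
    rfl
  have hu : IsUnit (Matrix.fromCols B C₁) :=
    Matrix.mulVec_surjective_iff_isUnit.mp hsurj
  exact ⟨C₁, ((Matrix.isUnit_iff_isUnit_det _).mp hu).ne_zero⟩

theorem aeRegular_columns_iff {k m : ℕ}
    (BL BU : Matrix (Fin k ⊕ Fin m) (Fin k) ℝ)
    (CL CU : Matrix (Fin k ⊕ Fin m) (Fin m) ℝ)
    (hB : ∀ i j, BL i j ≤ BU i j) (hC : ∀ i j, CL i j < CU i j) :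
    (∀ B : Matrix (Fin k ⊕ Fin m) (Fin k) ℝ,
        (∀ i j, BL i j ≤ B i j ∧ B i j ≤ BU i j) →
        ∃ C : Matrix (Fin k ⊕ Fin m) (Fin m) ℝ,
          (∀ i j, CL i j ≤ C i j ∧ C i j ≤ CU i j) ∧
          (Matrix.fromCols B C).det ≠ 0) ↔
    (∀ B : Matrix (Fin k ⊕ Fin m) (Fin k) ℝ,
        (∀ i j, BL i j ≤ B i j ∧ B i j ≤ BU i j) → B.rank = k) := by
  constructor
  · intro h B hBmem
    obtain ⟨C, _, hdet⟩ := h B hBmem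
    exact aux_rank_of_det B C hdet
  · intro h B hBmem
    obtain ⟨C₁, hC₁⟩ := aux_exists_completion B (h B hBmem)
    -- midpoint and radius
    set C₀ : Matrix (Fin k ⊕ Fin m) (Fin m) ℝ :=
      Matrix.of fun i j => (CL i j + CU i j) / 2 with hC₀
    set D : Matrix (Fin k ⊕ Fin m) (Fin m) ℝ := C₁ - C₀ with hD
    set r : Matrix (Fin k ⊕ Fin m) (Fin m) ℝ :=
      Matrix.of fun i j => (CU i j - CL i j) / 2 with hr
    have hrpos : ∀ i j, 0 < r i j := fun i j => by
      have := hC i j; simp [hr]; linarith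
    -- the determinant polynomial
    set M : Matrix (Fin k ⊕ Fin m) (Fin k ⊕ Fin m) ℝ[X] :=
      Matrix.fromCols (B.map Polynomial.C)
        (Matrix.of fun i j => Polynomial.C (C₀ i j) + Polynomial.X * Polynomial.C (D i j))
        with hM
    set P : ℝ[X] := M.det with hP
    have hPeval : ∀ t : ℝ, P.eval t =
        (Matrix.fromCols B (C₀ + t • D)).det := by
      intro t
      have h0 := (Polynomial.evalRingHom t).map_det M
      rw [hP, ← Polynomial.coe_evalRingHom, h0]
      congr 1
      ext i j
      cases j with
      | inl j => simp [hM, RingHom.mapMatrix_apply, Matrix.map_apply]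
      | inr j =>
        simp [hM, RingHom.mapMatrix_apply, Matrix.map_apply, Matrix.add_apply,
          Matrix.smul_apply, smul_eq_mul]
        ring
    have hP1 : P.eval 1 ≠ 0 := by
      rw [hPeval]
      have : C₀ + (1 : ℝ) • D = C₁ := by simp [hD]
      rw [this]; exact hC₁
    have hPne : P ≠ 0 := fun h0 => hP1 (by rw [h0]; simp)
    have hroots : Set.Finite {t : ℝ | P.IsRoot t} := Polynomial.finite_setOf_isRoot hPne
    -- choose small t
    set S : ℝ := ∑ p : (Fin k ⊕ Fin m) × Fin m, |D p.1 p.2| / r p.1 p.2 with hS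
    have hSnn : 0 ≤ S := Finset.sum_nonneg fun p _ =>
      div_nonneg (abs_nonneg _) (hrpos p.1 p.2).le
    set ε : ℝ := 1 / (1 + S) with hε
    have hεpos : 0 < ε := by positivity
    have hIoo : (Set.Ioo (0:ℝ) ε).Infinite := Set.infinite_coe_iff.mp (Set.Ioo.infinite hεpos)
    obtain ⟨t, ht⟩ := (hIoo.diff hroots).nonempty
    obtain ⟨⟨ht0, htε⟩, htroot⟩ := ht
    refine ⟨C₀ + t • D, ?_, ?_⟩
    · intro i j
      have hterm : |D i j| / r i j ≤ S := by
        refine Finset.single_le_sum (f := fun p : (Fin k ⊕ Fin m) × Fin m =>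
          |D p.1 p.2| / r p.1 p.2) (fun p _ => div_nonneg (abs_nonneg _) (hrpos p.1 p.2).le)
          (Finset.mem_univ (i, j))
      have hrp := hrpos i j
      have hDb : |D i j| ≤ S * r i j := by
        rw [div_le_iff₀ hrp] at hterm; linarith
      have habs : |t * D i j| ≤ r i j := by
        rw [abs_mul, abs_of_pos ht0]
        have h1 : t * |D i j| ≤ t * (S * r i j) :=
          mul_le_mul_of_nonneg_left hDb ht0.le
        have h2 : t * (S * r i j) ≤ ε * (S * r i j) :=
          mul_le_mul_of_nonneg_right htε.le (mul_nonneg hSnn hrp.le)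
        have hS1 : 0 < 1 + S := by linarith
        have h3 : ε * (1 + S) = 1 := by
          rw [hε, div_mul_cancel₀]
          exact ne_of_gt hS1
        nlinarith
      obtain ⟨h1, h2⟩ := abs_le.mp habs
      have e1 : (C₀ + t • D) i j = C₀ i j + t * D i j := by
        simp [Matrix.add_apply, Matrix.smul_apply, smul_eq_mul]
      have e2 : C₀ i j = (CL i j + CU i j) / 2 := rfl
      have e3 : r i j = (CU i j - CL i j) / 2 := rfl
      rw [e1]
      constructor <;> linarith [e2, e3, h1, h2]
    · rw [← hPeval]; exact htroot
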